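/- (Proportionality of the two eigenfunctions) Let r, q be coprime positive integers with 1/2 < r/q < 1, m an integer, κ = r/q + m, p = kq+1 an odd prime, and s a positive integer such that the positivity conditions p^s + (1−p^s)r/q + m' > 0 and (p^s−1)r/q − m' > 0 hold for both m' = m and m' = m−1. Then for every positive integer d, the congruence of polynomials (λ_2−λ_1) · p · ψ_{s,d}(z,λ,κ−1) ≡ κ · φ_{s,d}(z,λ,κ) (mod p^s) holds in ℤ_p[z_1,z_2,λ_1,λ_2], where κ = r/q + m ∈ ℤ_p. -/

import Mathlib

open Finset Polynomial

noncomputable section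

/-- `d(s) = ⌊s(p−1)/(p−2)⌋ + 1`. -/
def truncDeg (p s : ℕ) : ℕ := s * (p - 1) / (p - 2) + 1

/-- Variables: in `MvPolynomial (Fin 4) ℚ_p` we set `z₁ = X 0`, `z₂ = X 1`,
`λ₁ = X 2`, `λ₂ = X 3`; the variable `t` is the `Polynomial.X` of the outer ring.
The argument `pλ₁(z₁+z₂) + p(λ₂−λ₁)t` of the truncated exponential. -/
def masterArg (p : ℕ) [Fact p.Prime] : Polynomial (MvPolynomial (Fin 4) ℚ_[p]) :=
  Polynomial.C (MvPolynomial.C (p : ℚ_[p]) * MvPolynomial.X 2 *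
      (MvPolynomial.X 0 + MvPolynomial.X 1)) +
    Polynomial.C (MvPolynomial.C (p : ℚ_[p]) * (MvPolynomial.X 3 - MvPolynomial.X 2)) *
      Polynomial.X

/-- `ℰ_s(t,z,λ) = E_s(pλ₁(z₁+z₂) + p(λ₂−λ₁)t)`. -/
def truncExpPoly (p : ℕ) [Fact p.Prime] (s : ℕ) : Polynomial (MvPolynomial (Fin 4) ℚ_[p]) :=
  ∑ k ∈ Finset.range (truncDeg p s + 1),
    Polynomial.C (MvPolynomial.C ((k.factorial : ℚ_[p])⁻¹)) * masterArg p ^ k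

/-- The exponent `p^s + (1−p^s)r/q + m' = ((q−r)p^s + r)/q + m'` of `(z₁−z₂)`. -/
def zExp (p q r s : ℕ) (m' : ℤ) : ℤ := (((q : ℤ) - r) * (p : ℤ) ^ s + r) / q + m'

/-- The exponent `(p^s−1)r/q − m'` of `(t−z₁)(t−z₂)`. -/
def tExp (p q r s : ℕ) (m' : ℤ) : ℤ := ((r : ℤ) * ((p : ℤ) ^ s - 1)) / q - m'

/-- The master polynomial
`Φ_s(t,z,λ,κ') = ℰ_s · (z₁−z₂)^{p^s+(1−p^s)r/q+m'} · ((t−z₁)(t−z₂))^{(p^s−1)r/q−m'}`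
for `κ' = r/q + m'`, as a polynomial in `t` over `ℚ_p[z₁,z₂,λ₁,λ₂]`. -/
def masterPoly (p : ℕ) [Fact p.Prime] (q r s : ℕ) (m' : ℤ) :
    Polynomial (MvPolynomial (Fin 4) ℚ_[p]) :=
  truncExpPoly p s *
    Polynomial.C ((MvPolynomial.X 0 - MvPolynomial.X 1) ^ (zExp p q r s m').toNat) *
    ((Polynomial.X - Polynomial.C (MvPolynomial.X 0)) *
        (Polynomial.X - Polynomial.C (MvPolynomial.X 1))) ^ (tExp p q r s m').toNat

/-- `Φ_{s,1} = Φ_s/(t−z₁)`. -/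
def masterPoly1 (p : ℕ) [Fact p.Prime] (q r s : ℕ) (m' : ℤ) :
    Polynomial (MvPolynomial (Fin 4) ℚ_[p]) :=
  truncExpPoly p s *
    Polynomial.C ((MvPolynomial.X 0 - MvPolynomial.X 1) ^ (zExp p q r s m').toNat) *
    (Polynomial.X - Polynomial.C (MvPolynomial.X 0)) ^ ((tExp p q r s m').toNat - 1) *
    (Polynomial.X - Polynomial.C (MvPolynomial.X 1)) ^ (tExp p q r s m').toNat

/-- `Φ_{s,2} = Φ_s/(t−z₂)`. -/
def masterPoly2 (p : ℕ) [Fact p.Prime] (q r s : ℕ) (m' : ℤ) :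
    Polynomial (MvPolynomial (Fin 4) ℚ_[p]) :=
  truncExpPoly p s *
    Polynomial.C ((MvPolynomial.X 0 - MvPolynomial.X 1) ^ (zExp p q r s m').toNat) *
    (Polynomial.X - Polynomial.C (MvPolynomial.X 0)) ^ (tExp p q r s m').toNat *
    (Polynomial.X - Polynomial.C (MvPolynomial.X 1)) ^ ((tExp p q r s m').toNat - 1)

/-- `I_{s,i,d}`: the coefficient of `t^{d·p^s−1}` in `Φ_{s,i}`. -/
def Icoef (p : ℕ) [Fact p.Prime] (q r s : ℕ) (m' : ℤ) (i d : ℕ) :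
    MvPolynomial (Fin 4) ℚ_[p] :=
  (if i = 1 then masterPoly1 p q r s m' else masterPoly2 p q r s m').coeff (d * p ^ s - 1)

/-- `φ_{s,d} = I_{s,1,d} + I_{s,2,d}`. -/
def phiPoly (p : ℕ) [Fact p.Prime] (q r s : ℕ) (m' : ℤ) (d : ℕ) :
    MvPolynomial (Fin 4) ℚ_[p] :=
  Icoef p q r s m' 1 d + Icoef p q r s m' 2 d

/-- `ψ_{s,d} = I_{s,1,d} − I_{s,2,d}`. -/
def psiPoly (p : ℕ) [Fact p.Prime] (q r s : ℕ) (m' : ℤ) (d : ℕ) :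
    MvPolynomial (Fin 4) ℚ_[p] :=
  Icoef p q r s m' 1 d - Icoef p q r s m' 2 d

/-- Congruence of polynomials modulo `p^s`: all coefficients of the difference lie in
`p^s ℤ_p`. -/
def CongMod (p : ℕ) [Fact p.Prime] (s : ℕ) (P Q : MvPolynomial (Fin 4) ℚ_[p]) : Prop :=
  ∀ m : Fin 4 →₀ ℕ, ‖(P - Q).coeff m‖ ≤ (p : ℝ) ^ (-(s : ℤ))

end


noncomputable section
namespace PPAux
open Finset Polynomial
set_option synthInstance.maxHeartbeats 1000000
set_option maxHeartbeats 1000000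
variable {p : ℕ} [hp : Fact p.Prime]

lemma bracket {R : Type*} [CommRing R] (u v : R) (B : ℕ) :
    u ^ (B+1) * v ^ (B+2) - u ^ (B+2) * v ^ (B+1) = (u*v) ^ (B+1) * (v - u) := by
  rw [mul_pow]; ring

def ιm (p : ℕ) [Fact p.Prime] : MvPolynomial (Fin 4) ℤ_[p] →+* MvPolynomial (Fin 4) ℚ_[p] :=
  MvPolynomial.map (PadicInt.Coe.ringHom)

def ιP (p : ℕ) [Fact p.Prime] :
    Polynomial (MvPolynomial (Fin 4) ℤ_[p]) →+* Polynomial (MvPolynomial (Fin 4) ℚ_[p]) :=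
  Polynomial.mapRingHom (ιm p)

lemma mv_coeff_norm {Q : MvPolynomial (Fin 4) ℚ_[p]} (h : Q ∈ (ιm p).range)
    (mono : Fin 4 →₀ ℕ) : ‖Q.coeff mono‖ ≤ 1 := by
  obtain ⟨Q₀, rfl⟩ := h
  rw [ιm, MvPolynomial.coeff_map]
  exact (Q₀.coeff mono).2

lemma coeff_mem {P : Polynomial (MvPolynomial (Fin 4) ℚ_[p])} (h : P ∈ (ιP p).range) (n : ℕ) :
    P.coeff n ∈ (ιm p).range := by
  obtain ⟨P₀, rfl⟩ := h
  exact ⟨P₀.coeff n, by simp [ιP]⟩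

lemma X_mem : (Polynomial.X : Polynomial (MvPolynomial (Fin 4) ℚ_[p])) ∈ (ιP p).range :=
  ⟨Polynomial.X, by simp [ιP]⟩

lemma CX_mem (p : ℕ) [Fact p.Prime] (i : Fin 4) :
    (Polynomial.C (MvPolynomial.X i) : Polynomial (MvPolynomial (Fin 4) ℚ_[p])) ∈ (ιP p).range :=
  ⟨Polynomial.C (MvPolynomial.X i), by simp [ιP, ιm]⟩

lemma Cconst_mem (c : ℚ_[p]) (hc : ‖c‖ ≤ 1) :
    (Polynomial.C (MvPolynomial.C c) : Polynomial (MvPolynomial (Fin 4) ℚ_[p])) ∈ (ιP p).range :=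
  ⟨Polynomial.C (MvPolynomial.C ⟨c, hc⟩), by simp [ιP, ιm]; exact MvPolynomial.map_C _ _⟩

lemma mvX_mem (i : Fin 4) :
    (MvPolynomial.X i : MvPolynomial (Fin 4) ℚ_[p]) ∈ (ιm p).range :=
  ⟨MvPolynomial.X i, by simp [ιm]⟩

/-- `b` with `masterArg = p·b`. -/
def bPoly (p : ℕ) [Fact p.Prime] : Polynomial (MvPolynomial (Fin 4) ℚ_[p]) :=
  Polynomial.C (MvPolynomial.X 2 * (MvPolynomial.X 0 + MvPolynomial.X 1)) +
    Polynomial.C (MvPolynomial.X 3 - MvPolynomial.X 2) * Polynomial.X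

lemma masterArg_eq : masterArg p = Polynomial.C (MvPolynomial.C (p : ℚ_[p])) * bPoly p := by
  simp only [masterArg, bPoly, map_mul, map_add, map_sub]
  ring

lemma bPoly_mem : bPoly p ∈ (ιP p).range := by
  rw [bPoly, map_mul, map_sub, map_add]
  refine add_mem (mul_mem (CX_mem p 2) ?_) (mul_mem (sub_mem (CX_mem p 3) (CX_mem p 2)) X_mem)
  exact add_mem (CX_mem p 0) (CX_mem p 1)

lemma norm_factorial (k : ℕ) :
    ‖((k.factorial : ℚ_[p]))‖ = (p:ℝ) ^ (-(padicValNat p k.factorial : ℤ)) := by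
  rw [show ((k.factorial : ℚ_[p])) = ((k.factorial : ℕ) : ℚ_[p]) from by push_cast; ring,
    Padic.norm_eq_zpow_neg_valuation (by exact_mod_cast k.factorial_ne_zero), Padic.valuation_natCast]

lemma norm_p_pow_div_factorial (a k : ℕ) :
    ‖(p:ℚ_[p]) ^ a * ((k.factorial : ℚ_[p]))⁻¹‖
      = (p:ℝ) ^ ((padicValNat p k.factorial : ℤ) - a) := by
  rw [norm_mul, norm_inv, Padic.norm_p_pow, norm_factorial, ← zpow_neg, neg_neg,
    ← zpow_add₀ (show (p:ℝ) ≠ 0 by exact_mod_cast hp.out.ne_zero)]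
  congr 1
  ring

lemma vk_le (k : ℕ) : padicValNat p k.factorial ≤ k := by
  have h := sub_one_mul_padicValNat_factorial (p := p) k
  have h2 := hp.out.two_le
  have h3 : padicValNat p k.factorial ≤ (p-1) * padicValNat p k.factorial :=
    Nat.le_mul_of_pos_left _ (by omega)
  omega

lemma norm_term_le_one (k : ℕ) : ‖(p:ℚ_[p])^k * ((k.factorial : ℚ_[p]))⁻¹‖ ≤ 1 := by
  rw [norm_p_pow_div_factorial]
  calc (p:ℝ) ^ ((padicValNat p k.factorial : ℤ) - k)
      ≤ (p:ℝ) ^ (0:ℤ) := by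
        apply zpow_le_zpow_right₀ (by exact_mod_cast hp.out.one_lt.le)
        have := vk_le (p := p) k; omega
    _ = 1 := zpow_zero _

lemma truncExp_eq (s : ℕ) : truncExpPoly p s =
    ∑ k ∈ Finset.range (truncDeg p s + 1),
      Polynomial.C (MvPolynomial.C ((p:ℚ_[p])^k * (k.factorial : ℚ_[p])⁻¹)) * bPoly p ^ k := by
  rw [truncExpPoly]
  refine Finset.sum_congr rfl fun k _ => ?_
  rw [masterArg_eq, mul_pow]
  simp only [map_mul, map_pow]
  ring

lemma truncExp_mem (s : ℕ) : truncExpPoly p s ∈ (ιP p).range := by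
  rw [truncExp_eq]
  exact sum_mem fun k _ => mul_mem (Cconst_mem _ (norm_term_le_one k)) (pow_mem bPoly_mem k)

lemma Czw_pow_mem (A : ℕ) :
    (Polynomial.C ((MvPolynomial.X 0 - MvPolynomial.X 1) ^ A) :
      Polynomial (MvPolynomial (Fin 4) ℚ_[p])) ∈ (ιP p).range := by
  rw [map_pow, map_sub]
  exact pow_mem (sub_mem (CX_mem p 0) (CX_mem p 1)) A

lemma XsubC_pow_mem (i : Fin 4) (B : ℕ) :
    ((Polynomial.X - Polynomial.C (MvPolynomial.X i)) ^ B :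
      Polynomial (MvPolynomial (Fin 4) ℚ_[p])) ∈ (ιP p).range :=
  pow_mem (sub_mem X_mem (CX_mem p i)) B

lemma masterPoly_mem (q r s : ℕ) (m : ℤ) : masterPoly p q r s m ∈ (ιP p).range := by
  rw [masterPoly, mul_pow]
  exact mul_mem (mul_mem (truncExp_mem s) (Czw_pow_mem _)) (mul_mem (XsubC_pow_mem 0 _) (XsubC_pow_mem 1 _))

lemma masterPoly1_mem (q r s : ℕ) (m : ℤ) : masterPoly1 p q r s m ∈ (ιP p).range := by
  rw [masterPoly1]
  exact mul_mem (mul_mem (mul_mem (truncExp_mem s) (Czw_pow_mem _)) (XsubC_pow_mem 0 _)) (XsubC_pow_mem 1 _)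

lemma masterPoly2_mem (q r s : ℕ) (m : ℤ) : masterPoly2 p q r s m ∈ (ιP p).range := by
  rw [masterPoly2]
  exact mul_mem (mul_mem (mul_mem (truncExp_mem s) (Czw_pow_mem _)) (XsubC_pow_mem 0 _)) (XsubC_pow_mem 1 _)

lemma Qpoly_mem (A B D : ℕ) :
    (bPoly p ^ D * Polynomial.C ((MvPolynomial.X 0 - MvPolynomial.X 1) ^ A) *
      ((Polynomial.X - Polynomial.C (MvPolynomial.X 0)) *
        (Polynomial.X - Polynomial.C (MvPolynomial.X 1))) ^ B :
      Polynomial (MvPolynomial (Fin 4) ℚ_[p])) ∈ (ιP p).range := by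
  rw [mul_pow]
  exact mul_mem (mul_mem (pow_mem bPoly_mem D) (Czw_pow_mem _)) (mul_mem (XsubC_pow_mem 0 _) (XsubC_pow_mem 1 _))

lemma deriv_masterArg : derivative (masterArg p) =
    Polynomial.C (MvPolynomial.C (p:ℚ_[p]) * (MvPolynomial.X 3 - MvPolynomial.X 2)) := by
  simp [masterArg]

lemma deriv_truncExp (s : ℕ) :
    derivative (truncExpPoly p s) =
      Polynomial.C (MvPolynomial.C (p:ℚ_[p]) * (MvPolynomial.X 3 - MvPolynomial.X 2)) *
        (truncExpPoly p s -
          Polynomial.C (MvPolynomial.C (((truncDeg p s).factorial : ℚ_[p])⁻¹)) *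
            masterArg p ^ (truncDeg p s)) := by
  have hterm : ∀ j : ℕ,
      derivative (Polynomial.C (MvPolynomial.C (((j+1).factorial : ℚ_[p])⁻¹)) * masterArg p ^ (j+1)) =
        Polynomial.C (MvPolynomial.C (p:ℚ_[p]) * (MvPolynomial.X 3 - MvPolynomial.X 2)) *
          (Polynomial.C (MvPolynomial.C ((j.factorial : ℚ_[p])⁻¹)) * masterArg p ^ j) := by
    intro j
    rw [derivative_C_mul, derivative_pow, deriv_masterArg, Nat.add_sub_cancel]
    have hsc : (((j+1).factorial : ℚ_[p])⁻¹) * ((j+1 : ℕ) : ℚ_[p]) = ((j.factorial : ℚ_[p]))⁻¹ := by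
      have h1 : ((j+1 : ℕ) : ℚ_[p]) ≠ 0 := by exact_mod_cast Nat.succ_ne_zero j
      have h2 : ((j.factorial : ℚ_[p])) ≠ 0 := by exact_mod_cast j.factorial_ne_zero
      rw [Nat.factorial_succ]
      field_simp
      push_cast; ring
    have key : (Polynomial.C (MvPolynomial.C (((j+1).factorial : ℚ_[p])⁻¹)) :
          Polynomial (MvPolynomial (Fin 4) ℚ_[p])) * Polynomial.C ((j+1 : ℕ) : MvPolynomial (Fin 4) ℚ_[p])
        = Polynomial.C (MvPolynomial.C ((j.factorial : ℚ_[p])⁻¹)) := by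
      rw [← map_mul]
      congr 1
      rw [← map_natCast (MvPolynomial.C : ℚ_[p] →+* MvPolynomial (Fin 4) ℚ_[p]) (j+1), ← map_mul]
      exact congrArg _ hsc
    linear_combination (masterArg p ^ j *
      Polynomial.C (MvPolynomial.C (p:ℚ_[p]) * (MvPolynomial.X 3 - MvPolynomial.X 2))) * key
  conv_lhs => rw [truncExpPoly, derivative_sum]
  rw [Finset.sum_range_succ' (fun k =>
    derivative (Polynomial.C (MvPolynomial.C ((k.factorial : ℚ_[p])⁻¹)) * masterArg p ^ k))
    (truncDeg p s)]
  simp only [hterm]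
  rw [← Finset.mul_sum, truncExpPoly, Finset.sum_range_succ]
  simp

lemma stepA (q r s : ℕ) (m : ℤ) (A B : ℕ)
    (hA' : (zExp p q r s (m-1)).toNat = A)
    (hA : (zExp p q r s m).toNat = A + 1)
    (hB : (tExp p q r s m).toNat = B + 1)
    (hB' : (tExp p q r s (m-1)).toNat = B + 2) :
    masterPoly1 p q r s (m-1) - masterPoly2 p q r s (m-1) = masterPoly p q r s m := by
  simp only [masterPoly1, masterPoly2, masterPoly, hA, hA', hB, hB',
    (by omega : B + 2 - 1 = B + 1), map_pow, map_sub, mul_pow]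
  ring

lemma key_deriv (q r s : ℕ) (m : ℤ) (B : ℕ) (hB : (tExp p q r s m).toNat = B + 1) :
    derivative (masterPoly p q r s m) =
      Polynomial.C (MvPolynomial.C (p:ℚ_[p]) * (MvPolynomial.X 3 - MvPolynomial.X 2)) *
          masterPoly p q r s m
        - Polynomial.C (MvPolynomial.C ((p:ℚ_[p])^(truncDeg p s + 1) *
              (((truncDeg p s).factorial : ℚ_[p])⁻¹)) *
            (MvPolynomial.X 3 - MvPolynomial.X 2)) *
            (bPoly p ^ (truncDeg p s) *
              Polynomial.C ((MvPolynomial.X 0 - MvPolynomial.X 1) ^ (zExp p q r s m).toNat) *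
              ((Polynomial.X - Polynomial.C (MvPolynomial.X 0)) *
                (Polynomial.X - Polynomial.C (MvPolynomial.X 1))) ^ (tExp p q r s m).toNat)
        + Polynomial.C (((B+1 : ℕ)) : MvPolynomial (Fin 4) ℚ_[p]) *
            (masterPoly1 p q r s m + masterPoly2 p q r s m) := by
  have hsplit : (Polynomial.C (MvPolynomial.C ((p:ℚ_[p])^(truncDeg p s + 1) *
          (((truncDeg p s).factorial : ℚ_[p])⁻¹)) * (MvPolynomial.X 3 - MvPolynomial.X 2)) :
        Polynomial (MvPolynomial (Fin 4) ℚ_[p]))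
      = Polynomial.C (MvPolynomial.C (p:ℚ_[p]) * (MvPolynomial.X 3 - MvPolynomial.X 2)) *
          Polynomial.C (MvPolynomial.C (((truncDeg p s).factorial : ℚ_[p])⁻¹)) *
          (Polynomial.C (MvPolynomial.C (p:ℚ_[p])))^(truncDeg p s) := by
    simp only [← map_pow, ← map_mul]
    congr 1
    rw [show (p:ℚ_[p])^(truncDeg p s + 1) * (((truncDeg p s).factorial : ℚ_[p])⁻¹)
        = (p:ℚ_[p]) * (((truncDeg p s).factorial : ℚ_[p])⁻¹) * (p:ℚ_[p])^(truncDeg p s) from by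
          ring, map_mul, map_mul, map_pow]
    ring
  simp only [masterPoly, masterPoly1, masterPoly2, hB]
  rw [derivative_mul, derivative_mul, deriv_truncExp, derivative_C, derivative_pow,
    derivative_mul, derivative_sub, derivative_sub, derivative_X, derivative_C, derivative_C,
    hsplit, masterArg_eq]
  simp only [Nat.add_sub_cancel, mul_pow, mul_zero, zero_mul, add_zero, sub_zero, mul_one,
    one_mul]
  ring

lemma val_bound (hodd : p ≠ 2) (s : ℕ) (hs : 0 < s) :
    padicValNat p (truncDeg p s).factorial + s ≤ truncDeg p s + 1 := by
  have hp3 : 3 ≤ p := by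
    have h2 := hp.out.two_le; omega
  have hleg := sub_one_mul_padicValNat_factorial (p := p) (truncDeg p s)
  have h1 : (p-1) * padicValNat p (truncDeg p s).factorial ≤ truncDeg p s :=
    le_trans (le_of_eq hleg) (Nat.sub_le _ _)
  have hdm := Nat.div_add_mod (s*(p-1)) (p-2)
  have hlt : s*(p-1) % (p-2) < p-2 := Nat.mod_lt _ (by omega)
  have hDeq : truncDeg p s * (p-2) = (s*(p-1)/(p-2)) * (p-2) + (p-2) := by
    rw [truncDeg]; ring
  have h2 : s * (p-1) + 1 ≤ truncDeg p s * (p-2) := by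
    have hcm : (p-2) * (s*(p-1)/(p-2)) = (s*(p-1)/(p-2)) * (p-2) := mul_comm _ _
    linarith
  obtain ⟨a, ha⟩ : ∃ a, p = a + 3 := ⟨p - 3, by omega⟩
  have hp1 : p - 1 = a + 2 := by omega
  have hp2 : p - 2 = a + 1 := by omega
  rw [hp1] at h1
  rw [hp2] at h2
  rw [hp1] at hleg
  by_contra hcon'
  push_neg at hcon'
  have hmul : (a+2)*(truncDeg p s+2) ≤ (a+2)*(padicValNat p (truncDeg p s).factorial + s) :=
    Nat.mul_le_mul_left _ (by omega)
  nlinarith [h1, h2, hmul]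

lemma norm_c2 (hodd : p ≠ 2) (s : ℕ) (hs : 0 < s) :
    ‖(p:ℚ_[p])^(truncDeg p s + 1) * (((truncDeg p s).factorial : ℚ_[p])⁻¹)‖
      ≤ (p:ℝ)^(-(s:ℤ)) := by
  rw [norm_p_pow_div_factorial]
  apply zpow_le_zpow_right₀ (by exact_mod_cast hp.out.one_lt.le)
  have := val_bound (p := p) hodd s hs
  omega

lemma norm_q_one (q k : ℕ) (hq : 0 < q) (hk : 0 < k) (hp' : p = k*q+1) : ‖(q:ℚ_[p])‖ = 1 := by
  have hq1 : q ≤ k * q := Nat.le_mul_of_pos_left q hk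
  have hqlt : q < p := by omega
  have hnd : ¬ ((p:ℤ) ∣ (q:ℤ)) := by
    intro h
    have := Int.le_of_dvd (by exact_mod_cast hq) h
    omega
  have h1 : ‖((q:ℤ):ℚ_[p])‖ ≤ 1 := Padic.norm_int_le_one _
  have h2 : ¬ ‖((q:ℤ):ℚ_[p])‖ < 1 := fun hh => hnd ((Padic.norm_intCast_lt_one_iff).mp hh)
  have h3 : ‖((q:ℤ):ℚ_[p])‖ = 1 := le_antisymm h1 (not_lt.mp h2)
  simpa using h3

lemma norm_nat_le_one (a : ℕ) : ‖(a:ℚ_[p])‖ ≤ 1 := by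
  simpa using Padic.norm_int_le_one (p := p) (a:ℤ)

lemma norm_rps (q r k s : ℕ) (hq : 0 < q) (hk : 0 < k) (hp' : p = k*q+1) :
    ‖(r:ℚ_[p]) * (p:ℚ_[p])^s / (q:ℚ_[p])‖ ≤ (p:ℝ)^(-(s:ℤ)) := by
  rw [norm_div, norm_mul, Padic.norm_p_pow, norm_q_one (p := p) q k hq hk hp', div_one]
  calc ‖(r:ℚ_[p])‖ * (p:ℝ)^(-(s:ℤ)) ≤ 1 * (p:ℝ)^(-(s:ℤ)) :=
        mul_le_mul_of_nonneg_right (norm_nat_le_one r) (by positivity)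
    _ = (p:ℝ)^(-(s:ℤ)) := one_mul _

lemma norm_N (d s : ℕ) : ‖((d * p^s : ℕ) : ℚ_[p])‖ ≤ (p:ℝ)^(-(s:ℤ)) := by
  push_cast
  rw [norm_mul, Padic.norm_p_pow]
  calc ‖(d:ℚ_[p])‖ * (p:ℝ)^(-(s:ℤ)) ≤ 1 * (p:ℝ)^(-(s:ℤ)) :=
        mul_le_mul_of_nonneg_right (norm_nat_le_one d) (by positivity)
    _ = (p:ℝ)^(-(s:ℤ)) := one_mul _

lemma scalar_eq (q r k s : ℕ) (hq : 0 < q) (hk : 0 < k) (hp' : p = k*q+1) (m : ℤ) (B : ℕ)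
    (hpos : 0 < tExp p q r s m) (hB : (tExp p q r s m).toNat = B + 1) :
    ((B+1 : ℕ) : ℚ_[p]) + ((r:ℚ_[p])/(q:ℚ_[p]) + (m:ℚ_[p]))
      = (r:ℚ_[p]) * (p:ℚ_[p])^s / (q:ℚ_[p]) := by
  have hdvd1 : (q:ℤ) ∣ ((p:ℤ) - 1) := ⟨k, by rw [hp']; push_cast; ring⟩
  have hdvd : (q:ℤ) ∣ ((p:ℤ)^s - 1) := by
    refine dvd_trans hdvd1 ?_
    simpa using sub_dvd_pow_sub_pow (p:ℤ) 1 s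
  have hdvd2 : (q:ℤ) ∣ (r:ℤ) * ((p:ℤ)^s - 1) := Dvd.dvd.mul_left hdvd r
  have hc : (q:ℤ) * (((r:ℤ) * ((p:ℤ)^s - 1))/(q:ℤ)) = (r:ℤ) * ((p:ℤ)^s - 1) :=
    Int.mul_ediv_cancel' hdvd2
  have hBv : ((B + 1 : ℕ) : ℤ) = ((r:ℤ) * ((p:ℤ)^s - 1))/(q:ℤ) - m := by
    rw [← hB, Int.toNat_of_nonneg (le_of_lt hpos)]; rfl
  have hq0 : ((q:ℚ_[p])) ≠ 0 := Nat.cast_ne_zero.mpr hq.ne'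
  have hcq : ((((r:ℤ) * ((p:ℤ)^s - 1))/(q:ℤ) : ℤ) : ℚ_[p]) * (q:ℚ_[p])
      = (r:ℚ_[p]) * ((p:ℚ_[p])^s - 1) := by
    have := congrArg (fun z : ℤ => (z : ℚ_[p])) hc
    push_cast at this
    linear_combination this
  have hBq : ((B + 1 : ℕ) : ℚ_[p])
      = ((((r:ℤ) * ((p:ℤ)^s - 1))/(q:ℤ) : ℤ) : ℚ_[p]) - (m:ℚ_[p]) := by
    exact_mod_cast congrArg (fun z : ℤ => (z : ℚ_[p])) hBv
  rw [hBq]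
  have hrq : (r:ℚ_[p]) / (q:ℚ_[p]) * (q:ℚ_[p]) = (r:ℚ_[p]) := div_mul_cancel₀ _ hq0
  rw [eq_div_iff hq0]
  linear_combination hcq + hrq

end PPAux

/-- **Proportionality of the two eigenfunctions (Theorem 3.3).** Under the standing
assumptions, with the positivity conditions holding for both `m` and `m−1`, for every
positive integer `d` one has the congruence
`(λ₂−λ₁)·p·ψ_{s,d}(z,λ,κ−1) ≡ κ·φ_{s,d}(z,λ,κ) (mod p^s)`, where `κ = r/q + m ∈ ℤ_p`. -/
theorem psi_proportional_phi
    (p q r k s : ℕ) [Fact p.Prime] (hodd : p ≠ 2)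
    (hcop : Nat.Coprime r q) (hhalf : q < 2 * r) (hlt : r < q)
    (hk : 0 < k) (hp : p = k * q + 1) (hs : 0 < s) (m : ℤ)
    (hpos₁ : 0 < zExp p q r s m) (hpos₂ : 0 < tExp p q r s m)
    (hpos₁' : 0 < zExp p q r s (m - 1)) (hpos₂' : 0 < tExp p q r s (m - 1))
    (d : ℕ) (hd : 0 < d) :
    CongMod p s
      ((MvPolynomial.X 3 - MvPolynomial.X 2) * MvPolynomial.C (p : ℚ_[p]) *
        psiPoly p q r s (m - 1) d)
      (MvPolynomial.C ((r : ℚ_[p]) / (q : ℚ_[p]) + (m : ℚ_[p])) * phiPoly p q r s m d) := by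
  have hq : 0 < q := by omega
  have hfp : Fact p.Prime := inferInstance
  intro mono
  have hps : 0 < p ^ s := pow_pos hfp.out.pos s
  have hn1 : (d * p ^ s - 1) + 1 = d * p ^ s := by
    have := Nat.mul_pos hd hps; omega
  have hBeq : (tExp p q r s m).toNat = ((tExp p q r s m).toNat - 1) + 1 := by omega
  set B := (tExp p q r s m).toNat - 1 with hBdef
  have hz : zExp p q r s m = zExp p q r s (m-1) + 1 := by simp only [zExp]; ring
  have ht : tExp p q r s (m-1) = tExp p q r s m + 1 := by simp only [tExp]; ring
  have hA : (zExp p q r s m).toNat = (zExp p q r s (m-1)).toNat + 1 := by omega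
  have hB' : (tExp p q r s (m-1)).toNat = B + 2 := by omega
  have hstep := PPAux.stepA (p := p) q r s m ((zExp p q r s (m-1)).toNat) B rfl hA hBeq hB'
  have hkey := PPAux.key_deriv (p := p) q r s m B hBeq
  have hco := congrArg (fun f => Polynomial.coeff f (d * p ^ s - 1)) hkey
  simp only [Polynomial.coeff_derivative, Polynomial.coeff_add, Polynomial.coeff_sub,
    Polynomial.coeff_C_mul, hn1] at hco
  have hsc : ((d * p ^ s - 1 : ℕ) : MvPolynomial (Fin 4) ℚ_[p]) + 1
      = MvPolynomial.C (((d * p ^ s : ℕ) : ℚ_[p])) := by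
    rw [map_natCast (MvPolynomial.C : ℚ_[p] →+* MvPolynomial (Fin 4) ℚ_[p]), ← hn1]
    push_cast
    ring
  have hscB : ((B + 1 : ℕ) : MvPolynomial (Fin 4) ℚ_[p])
      = MvPolynomial.C (((B + 1 : ℕ) : ℚ_[p])) := (map_natCast _ _).symm
  rw [hsc, hscB] at hco
  have hsceq := PPAux.scalar_eq (p := p) q r k s hq hk hp m B hpos₂ hBeq
  have hκ : (MvPolynomial.C ((r : ℚ_[p]) / (q:ℚ_[p]) + (m:ℚ_[p])) : MvPolynomial (Fin 4) ℚ_[p])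
      = MvPolynomial.C ((r:ℚ_[p]) * (p:ℚ_[p])^s / (q:ℚ_[p]))
        - MvPolynomial.C (((B + 1 : ℕ) : ℚ_[p])) := by
    rw [← map_sub]
    congr 1
    linear_combination hsceq
  have hpsi : psiPoly p q r s (m-1) d
      = (masterPoly p q r s m).coeff (d * p ^ s - 1) := by
    rw [psiPoly, Icoef, Icoef, if_pos rfl, if_neg (by norm_num), ← Polynomial.coeff_sub, hstep]
  have hphi : phiPoly p q r s m d
      = (masterPoly1 p q r s m).coeff (d * p ^ s - 1)
        + (masterPoly2 p q r s m).coeff (d * p ^ s - 1) := by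
    rw [phiPoly, Icoef, Icoef, if_pos rfl, if_neg (by norm_num)]
  have hdiff :
      (MvPolynomial.X 3 - MvPolynomial.X 2) * MvPolynomial.C (p : ℚ_[p]) *
          psiPoly p q r s (m - 1) d
        - MvPolynomial.C ((r : ℚ_[p]) / (q : ℚ_[p]) + (m : ℚ_[p])) * phiPoly p q r s m d
      = MvPolynomial.C (((d * p ^ s : ℕ)) : ℚ_[p]) *
            ((masterPoly p q r s m).coeff (d * p ^ s))
        + MvPolynomial.C ((p:ℚ_[p])^(truncDeg p s + 1) *
              (((truncDeg p s).factorial : ℚ_[p])⁻¹)) *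
            ((MvPolynomial.X 3 - MvPolynomial.X 2) *
              (PPAux.bPoly p ^ (truncDeg p s) *
                Polynomial.C ((MvPolynomial.X 0 - MvPolynomial.X 1) ^ (zExp p q r s m).toNat) *
                ((Polynomial.X - Polynomial.C (MvPolynomial.X 0)) *
                  (Polynomial.X - Polynomial.C (MvPolynomial.X 1))) ^ (tExp p q r s m).toNat).coeff
                (d * p ^ s - 1))
        - MvPolynomial.C ((r:ℚ_[p]) * (p:ℚ_[p])^s / (q:ℚ_[p])) * phiPoly p q r s m d := by
    rw [hpsi, hphi, hκ]
    linear_combination -hco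
  rw [hdiff, MvPolynomial.coeff_sub, MvPolynomial.coeff_add, MvPolynomial.coeff_C_mul,
    MvPolynomial.coeff_C_mul, MvPolynomial.coeff_C_mul]
  have hbnd : ∀ (c : ℚ_[p]) (P : MvPolynomial (Fin 4) ℚ_[p]), P ∈ (PPAux.ιm p).range →
      ‖c‖ ≤ (p:ℝ)^(-(s:ℤ)) → ‖c * P.coeff mono‖ ≤ (p:ℝ)^(-(s:ℤ)) := by
    intro c P hP hc
    rw [norm_mul]
    calc ‖c‖ * ‖P.coeff mono‖ ≤ ‖c‖ * 1 :=
          mul_le_mul_of_nonneg_left (PPAux.mv_coeff_norm hP mono) (norm_nonneg c)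
      _ = ‖c‖ := mul_one _
      _ ≤ _ := hc
  have tri : ∀ x y z : ℚ_[p], ‖x‖ ≤ (p:ℝ)^(-(s:ℤ)) → ‖y‖ ≤ (p:ℝ)^(-(s:ℤ)) →
      ‖z‖ ≤ (p:ℝ)^(-(s:ℤ)) → ‖x + y - z‖ ≤ (p:ℝ)^(-(s:ℤ)) := by
    intro x y z hx hy hz
    rw [sub_eq_add_neg]
    refine le_trans (Padic.nonarchimedean _ _) (max_le
      (le_trans (Padic.nonarchimedean _ _) (max_le hx hy)) ?_)
    rw [norm_neg]; exact hz
  refine tri _ _ _ ?_ ?_ ?_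
  · exact hbnd _ _ (PPAux.coeff_mem (PPAux.masterPoly_mem q r s m) _) (PPAux.norm_N d s)
  · refine hbnd _ _ ?_ (PPAux.norm_c2 hodd s hs)
    exact mul_mem (sub_mem (PPAux.mvX_mem 3) (PPAux.mvX_mem 2))
      (PPAux.coeff_mem (PPAux.Qpoly_mem _ _ _) _)
  · refine hbnd _ _ ?_ (PPAux.norm_rps q r k s hq hk hp)
    rw [hphi]
    exact add_mem (PPAux.coeff_mem (PPAux.masterPoly1_mem q r s m) _)
      (PPAux.coeff_mem (PPAux.masterPoly2_mem q r s m) _)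

end
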